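/- Let R be a finite group of order r with identity e, and let γ be a non-identity permutation of the set R fixing e and generating a cyclic group of order strictly less than r. For each l ≥ 2, let n_l be the number of cycles of length l in the cycle decomposition of γ. Then the number of labelled Cayley maps (S, 𝔯) on R such that γ is an automorphism of CM(R,S,𝔯) is at most Σ_{l=2}^{r−1} Σ_{k=1}^{n_l} C(n_l, k) · k! · l^k, where C(n, k) is the binomial coefficient. -/

import Mathlib

/-- `S` is a Cayley connection set on `R`: it avoids the identity, is inverse-closed,
and generates `R`. -/
def IsCayleyGenSet {R : Type*} [Group R] (S : Finset R) : Prop :=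
  (1 : R) ∉ S ∧ (∀ s ∈ S, s⁻¹ ∈ S) ∧ Subgroup.closure (S : Set R) = ⊤

/-- `r` is a cyclic ordering of `S` (extended by the identity outside `S`):
a permutation acting as a single cycle of length `|S|` on `S`, with no fixed
points in `S`, fixing everything outside `S`. -/
def IsCyclicOrderingOn {R : Type*} [Group R] (S : Finset R) (r : Equiv.Perm R) : Prop :=
  r.IsCycleOn (S : Set R) ∧ (∀ x ∈ S, r x ≠ x) ∧ (∀ x ∉ S, r x = x)

/-- The pair `(S, r)` is a labelled Cayley map on `R`. -/
def IsCayleyMap {R : Type*} [Group R] (S : Finset R) (r : Equiv.Perm R) : Prop :=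
  IsCayleyGenSet S ∧ IsCyclicOrderingOn S r

/-- `φ` is an automorphism of the Cayley map `CM(R,S,r)`: a graph automorphism of
`Cay(R,S)` (edges `x ~ y` iff `x * y⁻¹ ∈ S`, so the neighbourhood of `g` is `S * g`)
commuting with the rotations `ρ_g(x) = r (x * g⁻¹) * g`, i.e.
`φ ∘ ρ_g = ρ_{φ g} ∘ φ` on the neighbourhood of each vertex `g`. -/
def IsCayleyMapAut {R : Type*} [Group R] (S : Finset R) (r : Equiv.Perm R)
    (φ : Equiv.Perm R) : Prop :=
  (∀ x y : R, x * y⁻¹ ∈ S ↔ φ x * (φ y)⁻¹ ∈ S) ∧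
  (∀ g x : R, x * g⁻¹ ∈ S → φ (r (x * g⁻¹) * g) = r (φ x * (φ g)⁻¹) * φ g)

/-- The Cayley map `CM(R,S,r)` is a mapical regular representation: its automorphisms
are exactly the right translations `x ↦ x * g`. -/
def IsMRR {R : Type*} [Group R] (S : Finset R) (r : Equiv.Perm R) : Prop :=
  ∀ φ : Equiv.Perm R, IsCayleyMapAut S r φ ↔ ∃ g : R, ∀ x : R, φ x = x * g

set_option linter.unusedSectionVars false
set_option linter.unusedVariables false

section Helpers

variable {R : Type*} [Group R] [Fintype R] [DecidableEq R]

private lemma fn_comm_pow (r : Equiv.Perm R) (δ : R → R)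
    (h : ∀ y, δ (r y) = r (δ y)) : ∀ (n : ℕ) (y : R), δ ((r ^ n) y) = (r ^ n) (δ y) := by
  intro n
  induction n with
  | zero => simp
  | succ n ih =>
    intro y
    have h1 : (r ^ (n + 1) : Equiv.Perm R) y = (r ^ n) (r y) := by
      rw [pow_succ, Equiv.Perm.mul_apply]
    have h2 : (r ^ (n + 1) : Equiv.Perm R) (δ y) = (r ^ n) (r (δ y)) := by
      rw [pow_succ, Equiv.Perm.mul_apply]
    rw [h1, h2, ih, h]

private lemma fn_comm_zpow (r : Equiv.Perm R) (δ : R → R)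
    (h : ∀ y, δ (r y) = r (δ y)) : ∀ (i : ℤ) (y : R), δ ((r ^ i) y) = (r ^ i) (δ y) := by
  have hinv : ∀ y, δ (r⁻¹ y) = r⁻¹ (δ y) := by
    intro y
    have h1 := h (r⁻¹ y)
    simp only [Equiv.Perm.coe_inv, Equiv.apply_symm_apply] at h1
    rw [h1, Equiv.Perm.coe_inv, Equiv.symm_apply_apply]
  intro i y
  cases i with
  | ofNat n =>
    simpa using fn_comm_pow r δ h n y
  | negSucc n =>
    rw [zpow_negSucc, ← inv_pow]
    exact fn_comm_pow r⁻¹ δ hinv (n + 1) y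

private lemma comm_apply_zpow {γ r : Equiv.Perm R} (h : Commute γ r) (j : ℤ) (x : R) :
    (γ ^ j) (r x) = r ((γ ^ j) x) := by
  have hc := (h.zpow_left j).eq
  calc (γ ^ j) (r x) = ((γ ^ j) * r) x := rfl
    _ = (r * (γ ^ j)) x := by rw [hc]
    _ = r ((γ ^ j) x) := rfl

private lemma delta_eq_id (r : Equiv.Perm R) (δ : R → R)
    (hcyc : r.IsCycleOn (r.support : Set R))
    (hcomm : ∀ y, δ (r y) = r (δ y))
    {s₀ : R} (hs₀ : s₀ ∈ r.support) (hfixδ : δ s₀ = s₀) :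
    ∀ s ∈ r.support, δ s = s := by
  intro s hs
  obtain ⟨i, hi⟩ := hcyc.2 (by exact_mod_cast hs₀) (by exact_mod_cast hs)
  rw [← hi, fn_comm_zpow r δ hcomm, hfixδ]

lemma cayley_facts (γ r : Equiv.Perm R) (hγ : γ ≠ 1) (hfix1 : γ 1 = 1)
    (hmap : IsCayleyMap r.support r) (haut : IsCayleyMapAut r.support r γ) :
    Commute γ r ∧ r.support.Nonempty ∧ (∀ s ∈ r.support, γ s ≠ s) ∧
      (∀ s ∈ r.support, (γ.cycleOf s).support ⊆ r.support) ∧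
      (∀ s ∈ r.support, ∀ t ∈ r.support,
        (γ.cycleOf s).support.card = (γ.cycleOf t).support.card) := by
  classical
  obtain ⟨⟨h1S, hinvS, hgen⟩, hcyc, hmv, hout⟩ := hmap
  obtain ⟨haut1, haut2⟩ := haut
  have hSiff : ∀ x, x ∈ r.support ↔ γ x ∈ r.support := by
    intro x
    simpa [hfix1] using haut1 x 1
  have hcommfn : ∀ x, γ (r x) = r (γ x) := by
    intro x
    by_cases hx : x ∈ r.support
    · simpa [hfix1] using haut2 1 x (by simpa using hx)
    · rw [hout x hx, hout (γ x) (fun h => hx ((hSiff x).mpr h))]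
  have hcomm : Commute γ r := by
    apply Equiv.ext
    intro x
    simpa [Equiv.Perm.mul_apply] using hcommfn x
  have hne : r.support.Nonempty := by
    by_contra h
    have hS0 : r.support = ∅ := Finset.not_nonempty_iff_eq_empty.mp h
    apply hγ
    have hsub : ∀ x : R, x = 1 := by
      intro x
      have hx : x ∈ (⊤ : Subgroup R) := trivial
      rw [← hgen, hS0] at hx
      simpa using hx
    exact Equiv.ext fun x => by rw [hsub x, hfix1]; rfl
  have hmoved : ∃ s ∈ r.support, γ s ≠ s := by
    by_contra h
    push_neg at h
    apply hγ
    set P : R → Prop := fun g => γ g = g ∧ ∀ s ∈ r.support, γ (s * g) = s * g with hP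
    have hP1 : P 1 := ⟨hfix1, fun s hs => by rw [mul_one]; exact h s hs⟩
    have hstep : ∀ g, P g → ∀ s₀ ∈ r.support, P (s₀ * g) := by
      intro g hg s₀ hs₀
      have hg' : γ (s₀ * g) = s₀ * g := hg.2 s₀ hs₀
      set g' := s₀ * g with hg'def
      set δ : R → R := fun y => γ (y * g') * g'⁻¹ with hδ
      have hδS : ∀ y, y ∈ r.support ↔ δ y ∈ r.support := by
        intro y
        have h1 := haut1 (y * g') g'
        rw [hg'] at h1
        simpa [hδ] using h1
      have hδr : ∀ y, δ (r y) = r (δ y) := by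
        intro y
        by_cases hy : y ∈ r.support
        · have h2 := haut2 g' (y * g') (by simpa using hy)
          rw [hg'] at h2
          simp only [mul_inv_cancel_right] at h2
          show γ (r y * g') * g'⁻¹ = r (δ y)
          rw [h2, mul_inv_cancel_right]
        · rw [hout y hy, hout (δ y) (fun hc => hy ((hδS y).mpr hc))]
      have hδfix : δ s₀⁻¹ = s₀⁻¹ := by
        show γ (s₀⁻¹ * g') * g'⁻¹ = s₀⁻¹
        rw [hg'def, inv_mul_cancel_left, hg.1, mul_inv_rev, mul_inv_cancel_left]
      have hδid : ∀ s ∈ r.support, δ s = s :=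
        delta_eq_id r δ hcyc hδr (hinvS s₀ hs₀) hδfix
      refine ⟨hg', fun s hs => ?_⟩
      have h3 := hδid s hs
      calc γ (s * g') = (γ (s * g') * g'⁻¹) * g' := by rw [inv_mul_cancel_right]
        _ = s * g' := by rw [show γ (s * g') * g'⁻¹ = s from h3]
    have hlist : ∀ L : List R, (∀ y ∈ L, y ∈ (r.support : Set R)) → P L.prod := by
      intro L
      induction L with
      | nil => intro _; simpa using hP1
      | cons a L ih =>
        intro hmem
        rw [List.prod_cons]
        exact hstep _ (ih fun y hy => hmem y (List.mem_cons_of_mem _ hy)) a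
          (by exact_mod_cast hmem a List.mem_cons_self)
    have hallmem : ∀ g : R, P g := by
      intro g
      have hg : g ∈ Submonoid.closure (r.support : Set R) := by
        have h1 : g ∈ (Subgroup.closure (r.support : Set R)).toSubmonoid := by
          rw [Subgroup.mem_toSubmonoid, hgen]; trivial
        rw [Subgroup.closure_toSubmonoid] at h1
        have hSinv : (r.support : Set R) ∪ (r.support : Set R)⁻¹ = (r.support : Set R) := by
          apply Set.union_eq_self_of_subset_right
          intro x hx
          have h2 := hinvS x⁻¹ (by simpa using hx)
          simpa using h2
        rwa [hSinv] at h1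
      obtain ⟨L, hL, hprod⟩ := Submonoid.exists_list_of_mem_closure hg
      rw [← hprod]
      exact hlist L hL
    exact Equiv.ext fun x => by rw [(hallmem x).1]; rfl
  have hmovedall : ∀ s ∈ r.support, γ s ≠ s := by
    obtain ⟨s₀, hs₀, hs₀ne⟩ := hmoved
    intro s hs hcontra
    apply hs₀ne
    obtain ⟨i, hi⟩ := hcyc.2 (by exact_mod_cast hs : s ∈ (r.support : Set R))
      (by exact_mod_cast hs₀)
    have hc := comm_apply_zpow (hcomm.symm) i
    calc γ s₀ = γ ((r ^ i) s) := by rw [hi]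
      _ = (r ^ i) (γ s) := by
          exact (comm_apply_zpow (r := γ) (γ := r) hcomm.symm i s).symm
      _ = (r ^ i) s := by rw [hcontra]
      _ = s₀ := hi
  have hzpinv : ∀ (j : ℤ) (x : R), x ∈ r.support ↔ (γ ^ j) x ∈ r.support := by
    intro j
    induction j using Int.induction_on with
    | zero => simp
    | succ i ih =>
      intro x
      have he : (γ ^ ((i : ℤ) + 1)) x = (γ ^ (i : ℤ)) (γ x) := by
        rw [zpow_add_one, Equiv.Perm.mul_apply]
      rw [he]
      exact (hSiff x).trans (ih (γ x))
    | pred i ih =>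
      intro x
      have he : (γ ^ (-(i : ℤ) - 1)) x = (γ ^ (-(i : ℤ))) (γ⁻¹ x) := by
        rw [zpow_sub_one, Equiv.Perm.mul_apply]
      rw [he]
      have h1 : x ∈ r.support ↔ γ⁻¹ x ∈ r.support := by
        have := hSiff (γ⁻¹ x)
        simp only [Equiv.Perm.coe_inv, Equiv.apply_symm_apply] at this
        exact this.symm
      exact h1.trans (ih (γ⁻¹ x))
  have hsupcyc : ∀ s ∈ r.support, (γ.cycleOf s).support ⊆ r.support := by
    intro s hs y hy
    obtain ⟨hsame, -⟩ := (Equiv.Perm.mem_support_cycleOf_iff).1 hy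
    obtain ⟨j, hj⟩ := hsame
    rw [← hj]
    exact (hzpinv j s).1 hs
  have hfixtrans : ∀ (M : ℕ), ∀ s ∈ r.support, ∀ t ∈ r.support,
      (γ ^ M) s = s → (γ ^ M) t = t := by
    intro M s hs t ht hMs
    obtain ⟨i, hi⟩ := hcyc.2 (by exact_mod_cast hs : s ∈ (r.support : Set R))
      (by exact_mod_cast ht)
    have hc : Commute (γ ^ M) (r ^ i) := (hcomm.pow_left M).zpow_right i
    calc (γ ^ M) t = (γ ^ M) ((r ^ i) s) := by rw [hi]
      _ = ((γ ^ M) * (r ^ i)) s := rfl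
      _ = ((r ^ i) * (γ ^ M)) s := by rw [hc.eq]
      _ = (r ^ i) ((γ ^ M) s) := rfl
      _ = t := by rw [hMs, hi]
  have hcards : ∀ s ∈ r.support, ∀ t ∈ r.support,
      (γ.cycleOf s).support.card = (γ.cycleOf t).support.card := by
    have hdvd : ∀ s ∈ r.support, ∀ t ∈ r.support,
        orderOf (γ.cycleOf t) ∣ orderOf (γ.cycleOf s) := by
      intro s hs t ht
      have hMs : (γ ^ orderOf (γ.cycleOf s)) s = s := by
        have h1 := pow_orderOf_eq_one (γ.cycleOf s)
        have h2 := Equiv.Perm.cycleOf_pow_apply_self γ s (orderOf (γ.cycleOf s))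
        rw [h1] at h2
        simpa using h2.symm
      have hMt : (γ ^ orderOf (γ.cycleOf s)) t = t := hfixtrans _ s hs t ht hMs
      have hcyt := Equiv.Perm.isCycle_cycleOf γ (hmovedall t ht)
      have h3 : (γ.cycleOf t) ^ orderOf (γ.cycleOf s) = 1 := by
        rw [hcyt.pow_eq_one_iff]
        refine ⟨t, ?_, ?_⟩
        · rw [Equiv.Perm.cycleOf_apply_self]; exact hmovedall t ht
        · rw [Equiv.Perm.cycleOf_pow_apply_self]; exact hMt
      exact orderOf_dvd_of_pow_eq_one h3
    intro s hs t ht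
    have h1 := (Equiv.Perm.isCycle_cycleOf γ (hmovedall s hs)).orderOf
    have h2 := (Equiv.Perm.isCycle_cycleOf γ (hmovedall t ht)).orderOf
    rw [← h1, ← h2]
    exact Nat.dvd_antisymm (hdvd t ht s hs) (hdvd s hs t ht)
  exact ⟨hcomm, hne, hmovedall, hsupcyc, hcards⟩

end Helpers

section Fiber

variable {R : Type*} [Group R] [Fintype R] [DecidableEq R]

/-- A base point for each cycle. -/
noncomputable def cycBase (c : Equiv.Perm R) : R :=
  if h : c.support.Nonempty then h.choose else 1

lemma cycBase_mem {c : Equiv.Perm R} (h : c.support.Nonempty) : cycBase c ∈ c.support := by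
  rw [cycBase, dif_pos h]
  exact h.choose_spec

lemma fiber_bound (γ : Equiv.Perm R) (l k : ℕ) (hl : 0 < l)
    (T : Finset (Equiv.Perm R)) (hTk : T.card = k)
    (hTf : T ⊆ γ.cycleFactorsFinset) (hTl : ∀ c ∈ T, c.support.card = l)
    (G : Finset (Equiv.Perm R))
    (hG : ∀ r ∈ G, Commute γ r ∧ (∀ x, x ∈ r.support ↔ ∃ c ∈ T, x ∈ c.support)) :
    G.card ≤ k.factorial * l ^ k := by
  classical
  have hTne : ∀ c ∈ T, c.support.Nonempty := fun c hc =>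
    Finset.card_pos.mp (by rw [hTl c hc]; exact hl)
  have hbase_mem : ∀ c ∈ T, cycBase c ∈ c.support := fun c hc => cycBase_mem (hTne c hc)
  -- encoding existence
  have henc : ∀ r ∈ G, ∃ p : ((↥T ↪ ↥T) × (↥T → Fin l)),
      ∀ c : ↥T, (γ ^ ((p.2 c : ℕ))) (cycBase ((p.1 c : Equiv.Perm R)))
        = r (cycBase (c : Equiv.Perm R)) := by
    intro r hr
    obtain ⟨hcm, hun⟩ := hG r hr
    have hbaseS : ∀ c ∈ T, cycBase c ∈ r.support := fun c hc =>
      (hun _).2 ⟨c, hc, hbase_mem c hc⟩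
    have himg : ∀ c : ↥T, r (cycBase (c : Equiv.Perm R)) ∈ r.support := fun c =>
      Equiv.Perm.apply_mem_support.2 (hbaseS _ c.2)
    have hcycT : ∀ x ∈ r.support, γ.cycleOf x ∈ T ∧ x ∈ (γ.cycleOf x).support := by
      intro x hx
      obtain ⟨c, hcT, hxc⟩ := (hun x).1 hx
      have hc_eq : c = γ.cycleOf x := Equiv.Perm.cycle_is_cycleOf hxc (hTf hcT)
      exact ⟨hc_eq ▸ hcT, hc_eq ▸ hxc⟩
    have hψmem : ∀ c : ↥T, γ.cycleOf (r (cycBase (c : Equiv.Perm R))) ∈ T := fun c =>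
      (hcycT _ (himg c)).1
    have hψinj : Function.Injective
        (fun c : ↥T => γ.cycleOf (r (cycBase (c : Equiv.Perm R)))) := by
      intro c c' h
      simp only at h
      have h1 : r (cycBase (c' : Equiv.Perm R))
          ∈ (γ.cycleOf (r (cycBase (c : Equiv.Perm R)))).support := by
        rw [h]; exact (hcycT _ (himg c')).2
      have hsc := (Equiv.Perm.mem_support_cycleOf_iff.1 h1).1
      obtain ⟨j, hj⟩ := hsc
      rw [comm_apply_zpow hcm j] at hj
      have hbeq : (γ ^ j) (cycBase (c : Equiv.Perm R)) = cycBase (c' : Equiv.Perm R) :=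
        r.injective hj
      have h2 : γ.cycleOf (cycBase (c : Equiv.Perm R))
          = γ.cycleOf (cycBase (c' : Equiv.Perm R)) :=
        Equiv.Perm.SameCycle.cycleOf_eq ⟨j, hbeq⟩
      have e1 : (c : Equiv.Perm R) = γ.cycleOf (cycBase (c : Equiv.Perm R)) :=
        Equiv.Perm.cycle_is_cycleOf (hbase_mem _ c.2) (hTf c.2)
      have e2 : (c' : Equiv.Perm R) = γ.cycleOf (cycBase (c' : Equiv.Perm R)) :=
        Equiv.Perm.cycle_is_cycleOf (hbase_mem _ c'.2) (hTf c'.2)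
      exact Subtype.ext (by rw [e1, e2, h2])
    have hoff : ∀ c : ↥T, ∃ i : ℕ, i < l ∧
        (γ ^ i) (cycBase (γ.cycleOf (r (cycBase (c : Equiv.Perm R)))))
          = r (cycBase (c : Equiv.Perm R)) := by
      intro c
      set d := γ.cycleOf (r (cycBase (c : Equiv.Perm R))) with hd
      have hdT : d ∈ T := hψmem c
      have hdf := hTf hdT
      have hbd : cycBase d ∈ d.support := hbase_mem _ hdT
      have hyd : r (cycBase (c : Equiv.Perm R)) ∈ d.support := (hcycT _ (himg c)).2
      have hdcyc : d.IsCycle := (Equiv.Perm.mem_cycleFactorsFinset_iff.1 hdf).1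
      obtain ⟨i, hi⟩ := hdcyc.exists_pow_eq (Equiv.Perm.mem_support.1 hbd)
        (Equiv.Perm.mem_support.1 hyd)
      refine ⟨i % l, Nat.mod_lt _ hl, ?_⟩
      have hod : orderOf d = l := by rw [hdcyc.orderOf, hTl d hdT]
      have hmod : d ^ (i % l) = d ^ i := by
        rw [← hod]; exact pow_mod_orderOf d i
      have e : d = γ.cycleOf (cycBase d) := Equiv.Perm.cycle_is_cycleOf hbd hdf
      calc (γ ^ (i % l)) (cycBase d)
          = ((γ.cycleOf (cycBase d)) ^ (i % l)) (cycBase d) := by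
            rw [Equiv.Perm.cycleOf_pow_apply_self]
        _ = (d ^ (i % l)) (cycBase d) := by rw [← e]
        _ = (d ^ i) (cycBase d) := by rw [hmod]
        _ = r (cycBase (c : Equiv.Perm R)) := hi
    refine ⟨⟨⟨fun c => ⟨γ.cycleOf (r (cycBase (c : Equiv.Perm R))), hψmem c⟩, ?_⟩,
      fun c => ⟨(hoff c).choose, (hoff c).choose_spec.1⟩⟩, ?_⟩
    · intro c c' h
      exact hψinj (congrArg Subtype.val h)
    · intro c
      exact (hoff c).choose_spec.2
  -- the encoding map
  let junk : ((↥T ↪ ↥T) × (↥T → Fin l)) := ⟨Function.Embedding.refl _, fun _ => ⟨0, hl⟩⟩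
  let enc : Equiv.Perm R → ((↥T ↪ ↥T) × (↥T → Fin l)) := fun r =>
    if h : r ∈ G then (henc r h).choose else junk
  have hspec : ∀ r (h : r ∈ G), ∀ c : ↥T,
      (γ ^ (((enc r).2 c : ℕ))) (cycBase (((enc r).1 c : Equiv.Perm R)))
        = r (cycBase (c : Equiv.Perm R)) := by
    intro r h c
    simp only [enc, dif_pos h]
    exact (henc r h).choose_spec c
  have hinj : Set.InjOn enc ↑G := by
    intro r hr r' hr' he
    have hbb : ∀ c : ↥T, r (cycBase (c : Equiv.Perm R)) = r' (cycBase (c : Equiv.Perm R)) := by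
      intro c
      rw [← hspec r hr c, ← hspec r' hr' c, he]
    obtain ⟨hc1, hu1⟩ := hG r hr
    obtain ⟨hc2, hu2⟩ := hG r' hr'
    ext x
    by_cases hx : x ∈ r.support
    · obtain ⟨c, hcT, hxc⟩ := (hu1 x).1 hx
      have hbc : cycBase c ∈ c.support := hbase_mem _ hcT
      have e : c = γ.cycleOf (cycBase c) := Equiv.Perm.cycle_is_cycleOf hbc (hTf hcT)
      have hxcy : x ∈ (γ.cycleOf (cycBase c)).support := e ▸ hxc
      obtain ⟨j, hj⟩ := (Equiv.Perm.mem_support_cycleOf_iff.1 hxcy).1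
      rw [← hj, ← comm_apply_zpow hc1 j, ← comm_apply_zpow hc2 j, hbb ⟨c, hcT⟩]
    · have hx' : x ∉ r'.support := fun hc => hx ((hu1 x).2 ((hu2 x).1 hc))
      rw [Equiv.Perm.notMem_support.1 hx, Equiv.Perm.notMem_support.1 hx']
  calc G.card ≤ (Finset.univ : Finset ((↥T ↪ ↥T) × (↥T → Fin l))).card :=
        Finset.card_le_card_of_injOn enc (fun _ _ => Finset.mem_univ _) hinj
    _ = Fintype.card ((↥T ↪ ↥T) × (↥T → Fin l)) := Finset.card_univ
    _ = Fintype.card (↥T ↪ ↥T) * Fintype.card (↥T → Fin l) := Fintype.card_prod _ _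
    _ = k.factorial * l ^ k := by
        rw [Fintype.card_embedding_eq, Fintype.card_fun, Fintype.card_coe, hTk,
          Fintype.card_fin, Nat.descFactorial_self]

end Fiber

/-- Let `R` be a finite group of order `r` and let `γ` be a non-identity permutation
of `R` fixing the identity and generating a cyclic group of order less than `r`.
Writing `n l` for the number of cycles of length `l` in the cycle decomposition of
`γ`, the number of labelled Cayley maps on `R` admitting `γ` as an automorphism is
at most `∑_{l = 2}^{r - 1} ∑_{k = 1}^{n l} C(n l, k) * k! * l ^ k`. -/
theorem count_cayley_maps_with_fixed_automorphism_sum_bound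
    {R : Type*} [Group R] [Fintype R] [DecidableEq R]
    (γ : Equiv.Perm R) (hγ : γ ≠ 1) (hfix : γ 1 = 1)
    (hord : orderOf γ < Fintype.card R)
    (n : ℕ → ℕ)
    (hn : ∀ l : ℕ, n l = (γ.cycleFactorsFinset.filter
      (fun c => c.support.card = l)).card) :
    {p : Finset R × Equiv.Perm R |
        IsCayleyMap p.1 p.2 ∧ IsCayleyMapAut p.1 p.2 γ}.ncard ≤
      ∑ l ∈ Finset.Icc 2 (Fintype.card R - 1), ∑ k ∈ Finset.Icc 1 (n l),
        Nat.choose (n l) k * Nat.factorial k * l ^ k := by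
  
  classical
  set F : Finset (Equiv.Perm R) := Finset.univ.filter
    (fun r => IsCayleyMap r.support r ∧ IsCayleyMapAut r.support r γ) with hFdef
  -- Step A : reduce to counting permutations
  have hA : {p : Finset R × Equiv.Perm R |
      IsCayleyMap p.1 p.2 ∧ IsCayleyMapAut p.1 p.2 γ}.ncard ≤ F.card := by
    have hsub : {p : Finset R × Equiv.Perm R |
        IsCayleyMap p.1 p.2 ∧ IsCayleyMapAut p.1 p.2 γ} ⊆
        ↑(F.image (fun r => (Equiv.Perm.support r, r))) := by
      rintro ⟨S, r⟩ ⟨hmap, haut⟩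
      have hS : S = r.support := by
        ext x
        constructor
        · intro hx
          exact Equiv.Perm.mem_support.2 (hmap.2.2.1 x hx)
        · intro hx
          by_contra hc
          exact (Equiv.Perm.mem_support.1 hx) (hmap.2.2.2 x hc)
      subst hS
      simp only [Finset.coe_image, Set.mem_image, Finset.mem_coe]
      exact ⟨r, Finset.mem_filter.2 ⟨Finset.mem_univ r, hmap, haut⟩, rfl⟩
    have h1 := Set.ncard_le_ncard hsub (Finset.finite_toSet _)
    rw [Set.ncard_coe_finset] at h1
    exact h1.trans (Finset.card_image_le)
  have hmemF : ∀ r ∈ F, IsCayleyMap r.support r ∧ IsCayleyMapAut r.support r γ := by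
    intro r hr
    exact (Finset.mem_filter.1 hr).2
  have hfacts := fun r (hr : r ∈ F) =>
    cayley_facts γ r hγ hfix (hmemF r hr).1 (hmemF r hr).2
  -- length and cycle-set functions
  set plen : Equiv.Perm R → ℕ := fun r =>
    if h : r.support.Nonempty then (γ.cycleOf h.choose).support.card else 0 with hplendef
  set cycT : Equiv.Perm R → Finset (Equiv.Perm R) := fun r =>
    γ.cycleFactorsFinset.filter (fun c => c.support ⊆ r.support) with hcycTdef
  have key : ∀ r ∈ F, (∀ c ∈ cycT r, c.support.card = plen r) ∧
      plen r ∈ Finset.Icc 2 (Fintype.card R - 1) ∧ (cycT r).Nonempty ∧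
      (∀ x, x ∈ r.support ↔ ∃ c ∈ cycT r, x ∈ c.support) := by
    intro r hr
    obtain ⟨hcomm, hne, hmv, hsubS, hcard⟩ := hfacts r hr
    have h1notS : (1 : R) ∉ r.support := (hmemF r hr).1.1.1
    have hplen : plen r = (γ.cycleOf hne.choose).support.card := dif_pos hne
    have hchoose : hne.choose ∈ r.support := hne.choose_spec
    have hcycmem : ∀ s ∈ r.support, γ.cycleOf s ∈ cycT r ∧ s ∈ (γ.cycleOf s).support := by
      intro s hs
      have hsg : γ s ≠ s := hmv s hs
      have h1 : γ.cycleOf s ∈ γ.cycleFactorsFinset :=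
        Equiv.Perm.cycleOf_mem_cycleFactorsFinset_iff.2 (Equiv.Perm.mem_support.2 hsg)
      refine ⟨Finset.mem_filter.2 ⟨h1, hsubS s hs⟩,
        Equiv.Perm.mem_support_cycleOf_iff.2
          ⟨Equiv.Perm.SameCycle.refl _ _, Equiv.Perm.mem_support.2 hsg⟩⟩
    refine ⟨?_, ?_, ?_, ?_⟩
    · intro c hc
      obtain ⟨hcf, hcs⟩ := Finset.mem_filter.1 hc
      have hcsne : c.support.Nonempty := by
        have h2 := (Equiv.Perm.mem_cycleFactorsFinset_iff.1 hcf).1.two_le_card_support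
        exact Finset.card_pos.mp (by omega)
      obtain ⟨t, ht⟩ := hcsne
      have htS : t ∈ r.support := hcs ht
      have e : c = γ.cycleOf t := Equiv.Perm.cycle_is_cycleOf ht hcf
      rw [e, hplen]
      exact hcard t htS _ hchoose
    · rw [Finset.mem_Icc, hplen]
      constructor
      · exact (Equiv.Perm.isCycle_cycleOf γ (hmv _ hchoose)).two_le_card_support
      · have hsubE : (γ.cycleOf hne.choose).support ⊆ Finset.univ.erase (1 : R) := by
          intro x hx
          refine Finset.mem_erase.2 ⟨?_, Finset.mem_univ x⟩
          rintro rfl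
          exact h1notS (hsubS _ hchoose hx)
        have h3 := Finset.card_le_card hsubE
        rwa [Finset.card_erase_of_mem (Finset.mem_univ _), Finset.card_univ] at h3
    · exact ⟨γ.cycleOf hne.choose, (hcycmem _ hchoose).1⟩
    · intro x
      constructor
      · intro hx
        exact ⟨γ.cycleOf x, (hcycmem x hx).1, (hcycmem x hx).2⟩
      · rintro ⟨c, hc, hxc⟩
        exact (Finset.mem_filter.1 hc).2 hxc
  -- Step B : fiberwise counting
  have hstep1 : F.card = ∑ l ∈ Finset.Icc 2 (Fintype.card R - 1),
      (F.filter (fun r => plen r = l)).card :=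
    Finset.card_eq_sum_card_fiberwise (fun r hr => (key r hr).2.1)
  have hstep2 : ∀ l ∈ Finset.Icc 2 (Fintype.card R - 1),
      (F.filter (fun r => plen r = l)).card ≤
        ∑ k ∈ Finset.Icc 1 (n l), Nat.choose (n l) k * Nat.factorial k * l ^ k := by
    intro l hl
    obtain ⟨hl2, hlm⟩ := Finset.mem_Icc.1 hl
    set Fl := F.filter (fun r => plen r = l) with hFl
    have hTsub : ∀ r ∈ Fl, cycT r ⊆ γ.cycleFactorsFinset.filter
        (fun c => c.support.card = l) := by
      intro r hr c hc
      obtain ⟨hrF, hrl⟩ := Finset.mem_filter.1 hr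
      exact Finset.mem_filter.2 ⟨(Finset.mem_filter.1 hc).1,
        by rw [(key r hrF).1 c hc, hrl]⟩
    have hkmem : ∀ r ∈ Fl, (cycT r).card ∈ Finset.Icc 1 (n l) := by
      intro r hr
      obtain ⟨hrF, hrl⟩ := Finset.mem_filter.1 hr
      rw [Finset.mem_Icc]
      refine ⟨Finset.card_pos.2 (key r hrF).2.2.1, ?_⟩
      rw [hn l]
      exact Finset.card_le_card (hTsub r hr)
    rw [Finset.card_eq_sum_card_fiberwise hkmem]
    apply Finset.sum_le_sum
    intro k hk
    set P := Finset.powersetCard k (γ.cycleFactorsFinset.filter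
      (fun c => c.support.card = l)) with hPdef
    have hmemP : ∀ r ∈ Fl.filter (fun r => (cycT r).card = k), cycT r ∈ P := by
      intro r hr
      obtain ⟨hrFl, hrk⟩ := Finset.mem_filter.1 hr
      exact Finset.mem_powersetCard.2 ⟨hTsub r hrFl, hrk⟩
    rw [Finset.card_eq_sum_card_fiberwise hmemP]
    have hbound : ∀ T ∈ P,
        ((Fl.filter (fun r => (cycT r).card = k)).filter (fun r => cycT r = T)).card ≤
          Nat.factorial k * l ^ k := by
      intro T hT
      obtain ⟨hTsub', hTcard⟩ := Finset.mem_powersetCard.1 hT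
      apply fiber_bound γ l k (by omega) T hTcard
        (hTsub'.trans (Finset.filter_subset _ _))
        (fun c hc => (Finset.mem_filter.1 (hTsub' hc)).2)
      intro r hr
      obtain ⟨hr1, hrT⟩ := Finset.mem_filter.1 hr
      obtain ⟨hrFl, -⟩ := Finset.mem_filter.1 hr1
      obtain ⟨hrF, -⟩ := Finset.mem_filter.1 hrFl
      obtain ⟨hcomm, -, -, -, -⟩ := hfacts r hrF
      refine ⟨hcomm, ?_⟩
      have hun := (key r hrF).2.2.2
      simp only [hrT] at hun
      exact hun
    calc ∑ T ∈ P, ((Fl.filter (fun r => (cycT r).card = k)).filter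
            (fun r => cycT r = T)).card
        ≤ P.card * (Nat.factorial k * l ^ k) := by
          have h4 := Finset.sum_le_card_nsmul P _ _ hbound
          simpa [smul_eq_mul] using h4
      _ = Nat.choose (n l) k * Nat.factorial k * l ^ k := by
          rw [hPdef, Finset.card_powersetCard, ← hn l, mul_assoc]
  calc {p : Finset R × Equiv.Perm R |
      IsCayleyMap p.1 p.2 ∧ IsCayleyMapAut p.1 p.2 γ}.ncard
      ≤ F.card := hA
    _ = ∑ l ∈ Finset.Icc 2 (Fintype.card R - 1),
        (F.filter (fun r => plen r = l)).card := hstep1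
    _ ≤ ∑ l ∈ Finset.Icc 2 (Fintype.card R - 1), ∑ k ∈ Finset.Icc 1 (n l),
        Nat.choose (n l) k * Nat.factorial k * l ^ k := Finset.sum_le_sum hstep2
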